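/- Let A be a continuous linear equivalence of ℋ = ℝ × H that preserves the Lorentz form, and let e ∈ H be a unit vector. Then there exist ε ∈ {1, −1}, surjective linear isometries Q and Q' of H, and a real α ≥ 0 such that A = P' ∘ R ∘ P, where P'(s,x) = (ε·s, Q' x), P(s,x) = (s, Q* x), and R(s,x) = (s·cosh α + ⟪e,x⟫·sinh α, (s·sinh α + (cosh α − 1)·⟪e,x⟫)·e + x). -/

import Mathlib

open scoped RealInnerProductSpace

noncomputable section

variable {H : Type*} [NormedAddCommGroup H] [InnerProductSpace ℝ H]

/-- The Lorentz form on `ℝ × H`: `⟨(s,x),(t,y)⟩_L = ⟪x,y⟫ - s·t`. -/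
def lorentzInner (z w : ℝ × H) : ℝ := ⟪z.2, w.2⟫ - z.1 * w.1

set_option maxHeartbeats 1600000 in
/-- Every continuous linear equivalence of `ℝ × H` preserving the Lorentz form can be written
as `P' ∘ R ∘ P` where `P' (s,x) = (ε·s, Q' x)` with `ε = ±1`, `P (s,x) = (s, Q* x)`, with
`Q, Q'` surjective linear isometries of `H`, and `R` is the standard boost of parameter
`α ≥ 0` in the direction of the unit vector `e`. -/
theorem lorentz_eq_rotation_boost_rotation [CompleteSpace H]
    (A : (ℝ × H) ≃L[ℝ] (ℝ × H))
    (hA : ∀ z w : ℝ × H, lorentzInner (A z) (A w) = lorentzInner z w)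
    (e : H) (he : ‖e‖ = 1) :
    ∃ (ε : ℝ) (Q Q' : H →ₗᵢ[ℝ] H) (α : ℝ),
      (ε = 1 ∨ ε = -1) ∧ Function.Surjective Q ∧ Function.Surjective Q' ∧ 0 ≤ α ∧
      ∀ (s : ℝ) (x : H),
        A (s, x) =
          (ε * (s * Real.cosh α +
              ⟪e, ContinuousLinearMap.adjoint Q.toContinuousLinearMap x⟫ * Real.sinh α),
           Q' ((s * Real.sinh α +
                (Real.cosh α - 1) * ⟪e, ContinuousLinearMap.adjoint Q.toContinuousLinearMap x⟫) • e
              + ContinuousLinearMap.adjoint Q.toContinuousLinearMap x)) := by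
  classical
  set a : ℝ := (A (1,0)).1 with ha_def
  set b : H := (A (1,0)).2 with hb_def
  set T : H →L[ℝ] H := (ContinuousLinearMap.snd ℝ ℝ H).comp
    ((A : (ℝ×H) →L[ℝ] (ℝ×H)).comp (ContinuousLinearMap.inr ℝ ℝ H)) with hT_def
  set F : H →L[ℝ] ℝ := (ContinuousLinearMap.fst ℝ ℝ H).comp
    ((A : (ℝ×H) →L[ℝ] (ℝ×H)).comp (ContinuousLinearMap.inr ℝ ℝ H)) with hF_def
  set v : H := (InnerProductSpace.toDual ℝ H).symm F with hv_def
  have hvF : ∀ x : H, ⟪v, x⟫ = F x := fun x => InnerProductSpace.toDual_symm_apply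
  have hFx : ∀ x : H, F x = (A (0, x)).1 := fun x => rfl
  have hTx : ∀ x : H, T x = (A (0, x)).2 := fun x => rfl
  have hsplit : ∀ (s : ℝ) (x : H), A (s, x) = (s * a + ⟪v, x⟫, s • b + T x) := by
    intro s x
    have : (s, x) = s • ((1:ℝ), (0:H)) + ((0:ℝ), x) := by
      simp [Prod.ext_iff]
    rw [this, map_add, map_smul]
    rw [hvF, hFx, hTx]
    simp [Prod.ext_iff]
    exact ⟨Or.inl rfl, rfl⟩
  have h1 : ⟪b, b⟫ - a * a = -1 := by
    have := hA (1,0) (1,0)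
    simp only [lorentzInner, ← ha_def, ← hb_def] at this
    simpa using this
  have h2 : ∀ y : H, ⟪b, T y⟫ = a * ⟪v, y⟫ := by
    intro y
    have := hA (1,0) (0,y)
    simp only [lorentzInner, ← ha_def, ← hb_def, ← hTx, ← hFx, ← hvF] at this
    simp at this
    linarith
  have h3 : ∀ x y : H, ⟪T x, T y⟫ = ⟪x, y⟫ + ⟪v, x⟫ * ⟪v, y⟫ := by
    intro x y
    have := hA (0,x) (0,y)
    simp only [lorentzInner, ← hTx, ← hFx, ← hvF] at this
    simp at this
    linarith
  set Tad : H →L[ℝ] H := ContinuousLinearMap.adjoint T with hTad_def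
  have hTadb : Tad b = a • v := by
    apply ext_inner_right ℝ
    intro y
    rw [hTad_def, ContinuousLinearMap.adjoint_inner_left, h2, real_inner_smul_left]
  have hTadT : ∀ x : H, Tad (T x) = x + ⟪v, x⟫ • v := by
    intro x
    apply ext_inner_right ℝ
    intro y
    rw [hTad_def, ContinuousLinearMap.adjoint_inner_left, h3, inner_add_left,
      real_inner_smul_left]
  set B : ℝ × H → ℝ × H := fun p => (a * p.1 - ⟪b, p.2⟫, (-p.1) • v + Tad p.2) with hB_def
  have hBA : ∀ z : ℝ × H, B (A z) = z := by
    rintro ⟨s, x⟩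
    rw [hsplit s x, hB_def]
    simp only
    rw [Prod.mk.injEq]
    refine ⟨?_, ?_⟩
    · rw [inner_add_right, real_inner_smul_right, h2]
      linear_combination (-s) * h1
    · rw [map_add, map_smul, hTadb, hTadT]
      module
  have hAB : ∀ z : ℝ × H, A (B z) = z := by
    intro z
    obtain ⟨w, rfl⟩ := A.surjective z
    rw [hBA, ← hBA w]
  have hkey10 : (a * a + ⟪v, -v⟫, a • b + T (-v)) = ((1:ℝ), (0:H)) := by
    have h10 : B (1, 0) = (a, -v) := by
      rw [hB_def]; simp
    have h := hAB (1, 0)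
    rw [h10, hsplit] at h
    exact h
  rw [Prod.mk.injEq] at hkey10
  obtain ⟨hk1, hk2⟩ := hkey10
  have hv2 : ⟪v, v⟫ = a * a - 1 := by
    rw [inner_neg_right] at hk1
    linarith
  have hTv : T v = a • b := by
    rw [map_neg] at hk2
    linear_combination (norm := module) -hk2
  have hTTad : ∀ x : H, T (Tad x) = x + ⟪b, x⟫ • b := by
    intro x
    have hkey : ((-⟪b,x⟫) * a + ⟪v, Tad x⟫, (-⟪b,x⟫) • b + T (Tad x)) = ((0:ℝ), x) := by
      have h0x : B (0, x) = (-⟪b, x⟫, Tad x) := by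
        rw [hB_def]; simp
      have h := hAB (0, x)
      rw [h0x, hsplit] at h
      exact h
    rw [Prod.mk.injEq] at hkey
    linear_combination (norm := module) hkey.2
  -- scalar setup
  have hbb : (0:ℝ) ≤ ⟪b,b⟫ := real_inner_self_nonneg
  have ha2 : a * a = 1 + ⟪b,b⟫ := by linarith
  have ha0 : a ≠ 0 := by intro h; rw [h] at ha2; nlinarith
  set ε : ℝ := if 0 < a then 1 else -1 with hε_def
  have hε : ε = 1 ∨ ε = -1 := by rw [hε_def]; split <;> simp
  have hε2 : ε * ε = 1 := by rcases hε with h|h <;> rw [h] <;> norm_num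
  set α : ℝ := Real.arsinh ‖b‖ with hα_def
  have hα0 : 0 ≤ α := Real.arsinh_nonneg_iff.mpr (norm_nonneg b)
  set sh : ℝ := Real.sinh α with hsh_def
  set c : ℝ := Real.cosh α with hc_def
  have hshb : sh = ‖b‖ := Real.sinh_arsinh ‖b‖
  have hc_pos : 0 < c := Real.cosh_pos α
  have hc0 : c ≠ 0 := ne_of_gt hc_pos
  have hc2 : c * c = 1 + sh * sh := by
    have h := Real.cosh_sq α
    rw [← hc_def, ← hsh_def] at h
    linear_combination h
  have hbb_norm : ⟪b,b⟫ = ‖b‖ * ‖b‖ := real_inner_self_eq_norm_mul_norm b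
  have hsh2 : sh * sh = ⟪b,b⟫ := by rw [hshb, hbb_norm]
  have hac : a = ε * c := by
    have hca : c * c = a * a := by linear_combination hc2 + hsh2 - ha2
    rcases mul_self_eq_mul_self_iff.mp hca with h | h
    · rw [hε_def]
      rcases lt_trichotomy 0 a with h' | h' | h'
      · rw [if_pos h', one_mul, h]
      · exact absurd h'.symm ha0
      · rw [h] at hc_pos; linarith
    · rw [hε_def]
      rcases lt_trichotomy 0 a with h' | h' | h'
      · rw [h] at hc_pos; linarith
      · exact absurd h'.symm ha0
      · rw [if_neg (by linarith), h]; ring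
  have hvb : ⟪v,v⟫ = ⟪b,b⟫ := by linarith
  have hvnorm : ‖v‖ = ‖b‖ := by
    have h := real_inner_self_eq_norm_mul_norm v
    rw [hvb, hbb_norm] at h
    exact (mul_self_inj (norm_nonneg v) (norm_nonneg b)).mp h.symm
  -- the unit vector u and the reflection Q
  set u : H := if h : v = 0 then e else (ε/‖v‖) • v with hu_def
  have hu_norm : ‖u‖ = 1 := by
    rw [hu_def]; split
    · exact he
    · rename_i h
      rw [norm_smul]
      have hv0 : ‖v‖ ≠ 0 := norm_ne_zero_iff.mpr h
      have : |ε| = 1 := by rcases hε with h'|h' <;> rw [h'] <;> norm_num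
      rw [Real.norm_eq_abs, abs_div, this, abs_norm]
      field_simp
  set Qe : H ≃ₗᵢ[ℝ] H := Submodule.reflection (ℝ ∙ (e - u))ᗮ with hQ_def
  have hQe : Qe e = u := Submodule.reflection_sub (by rw [he, hu_norm])
  have hQQ : ∀ x : H, Qe (Qe x) = x := fun x => Submodule.reflection_reflection _ x
  have hQsym : ∀ x y : H, ⟪Qe x, y⟫ = ⟪x, Qe y⟫ := by
    intro x y
    conv_lhs => rw [← hQQ y]
    exact Qe.inner_map_map x (Qe y)
  have hQv : Qe v = (ε * ‖v‖) • e := by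
    by_cases h : v = 0
    · simp [h]
    · have hv0 : ‖v‖ ≠ 0 := norm_ne_zero_iff.mpr h
      have hu : u = (ε/‖v‖) • v := by rw [hu_def, dif_neg h]
      have hQu : Qe u = e := by rw [← hQe, hQQ]
      have hvu : v = (ε * ‖v‖) • u := by
        rw [hu, smul_smul]
        have hee' : ε * ‖v‖ * (ε/‖v‖) = 1 := by field_simp; linear_combination hε2
        rw [hee', one_smul]
      conv_lhs => rw [hvu]
      rw [map_smul, hQu]
  set Q : H →ₗᵢ[ℝ] H := Qe.toLinearIsometry with hQdef
  have hadj : ∀ x : H, ContinuousLinearMap.adjoint Q.toContinuousLinearMap x = Qe x := by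
    intro x
    apply ext_inner_left ℝ
    intro y
    rw [ContinuousLinearMap.adjoint_inner_right]
    show ⟪Qe y, x⟫ = ⟪y, Qe x⟫
    rw [hQsym]
  -- the middle correction map and Q'
  have hee : ⟪e, e⟫ = (1:ℝ) := by
    rw [real_inner_self_eq_norm_mul_norm, he]; ring
  set Minv : H →ₗ[ℝ] H :=
    { toFun := fun x => x + ((1/c - 1) * ⟪e, x⟫) • e
      map_add' := by
        intro x y
        simp only [inner_add_right]
        module
      map_smul' := by
        intro r x
        simp only [inner_smul_right, RingHom.id_apply]
        module } with hM_def
  have hMapp : ∀ x : H, Minv x = x + ((1/c - 1) * ⟪e, x⟫) • e := fun x => rfl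
  have hMinner : ∀ x : H, ⟪e, Minv x⟫ = (1/c) * ⟪e, x⟫ := by
    intro x
    rw [hMapp, inner_add_right, real_inner_smul_right, hee]
    ring
  have hMnorm2 : ∀ x : H, ⟪Minv x, Minv x⟫ = ⟪x,x⟫ + (1/(c*c) - 1) * (⟪e,x⟫ * ⟪e,x⟫) := by
    intro x
    rw [hMapp, inner_add_left, inner_add_right, inner_add_right,
      real_inner_smul_left, real_inner_smul_left, real_inner_smul_right,
      real_inner_smul_right, hee, real_inner_comm x e]
    field_simp
    ring
  have hvsh : ‖v‖ = sh := by rw [hvnorm, hshb]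
  have hNnorm : ∀ x : H, ‖T (Qe (Minv x))‖ = ‖x‖ := by
    intro x
    have hvQ : ⟪v, Qe (Minv x)⟫ = ε * sh * (1/c) * ⟪e,x⟫ := by
      rw [← hQsym, hQv, real_inner_smul_left, hMinner, hvsh]
      ring
    have hkey : ⟪T (Qe (Minv x)), T (Qe (Minv x))⟫ = ⟪x, x⟫ := by
      rw [h3, Qe.inner_map_map, hvQ, hMnorm2]
      have hX : 1/(c*c) - 1 + sh*sh/(c*c) = 0 := by
        field_simp
        linarith [hc2]
      linear_combination (⟪e,x⟫*⟪e,x⟫) * hX + (sh*sh/(c*c)*⟪e,x⟫*⟪e,x⟫) * hε2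
    have h := congrArg Real.sqrt hkey
    rwa [real_inner_self_eq_norm_mul_norm, real_inner_self_eq_norm_mul_norm,
      Real.sqrt_mul_self (norm_nonneg _), Real.sqrt_mul_self (norm_nonneg _)] at h
  set L : H →ₗ[ℝ] H := (T : H →ₗ[ℝ] H) ∘ₗ ((Qe.toLinearEquiv : H →ₗ[ℝ] H) ∘ₗ Minv) with hL_def
  set Q' : H →ₗᵢ[ℝ] H := ⟨L, fun x => hNnorm x⟩ with hQ'_def
  have hQ'x : ∀ x : H, Q' x = T (Qe (Minv x)) := fun x => rfl
  -- surjectivity of Q'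
  have h1b : (1:ℝ) + ⟪b,b⟫ ≠ 0 := by positivity
  have hcc : 1/c * c = 1 := one_div_mul_cancel hc0
  have hTsurj_pre : ∀ z : H, T (Tad (z - (⟪b,z⟫/(1+⟪b,b⟫)) • b)) = z := by
    intro z
    have hmul : ⟪b,z⟫/(1+⟪b,b⟫) * (1+⟪b,b⟫) = ⟪b,z⟫ := div_mul_cancel₀ _ h1b
    have hk : ⟪b, z - (⟪b,z⟫/(1+⟪b,b⟫)) • b⟫ = ⟪b,z⟫/(1+⟪b,b⟫) := by
      rw [inner_sub_right, real_inner_smul_right]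
      linear_combination -hmul
    rw [hTTad, hk]
    module
  have hMinvM : ∀ y : H, Minv (y + ((c-1) * ⟪e,y⟫) • e) = y := by
    intro y
    rw [hMapp, inner_add_right, real_inner_smul_right, hee]
    match_scalars <;> first
      | ring1
      | linear_combination ⟪e,y⟫ * hcc
  have hQ'surj : Function.Surjective Q' := by
    intro z
    refine ⟨Qe (Tad (z - (⟪b,z⟫/(1+⟪b,b⟫)) • b))
      + ((c-1) * ⟪e, Qe (Tad (z - (⟪b,z⟫/(1+⟪b,b⟫)) • b))⟫) • e, ?_⟩
    rw [hQ'x, hMinvM, hQQ]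
    exact hTsurj_pre z
  -- conclusion
  refine ⟨ε, Q, Q', α, hε, Qe.surjective, hQ'surj, hα0, ?_⟩
  intro s x
  rw [hsplit, ← hc_def, ← hsh_def, hadj x]
  have hgE : ⟪e, Qe x⟫ = ⟪u, x⟫ := by rw [← hQsym, hQe]
  rw [hgE]
  have huv : sh * ⟪u, x⟫ = ε * ⟪v, x⟫ := by
    by_cases h : v = 0
    · have hb0 : ‖b‖ = 0 := by rw [← hvnorm, h, norm_zero]
      rw [hshb, hb0, h, inner_zero_left]
      ring
    · have hv0 : ‖v‖ ≠ 0 := norm_ne_zero_iff.mpr h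
      have hu : u = (ε/‖v‖) • v := by rw [hu_def, dif_neg h]
      have hvv : 1/‖v‖ * ‖v‖ = 1 := one_div_mul_cancel hv0
      rw [hu, real_inner_smul_left, ← hvsh]
      linear_combination (ε * ⟪v,x⟫) * hvv
  rw [Prod.mk.injEq]
  constructor
  · linear_combination s * hac - ε * huv - ⟪v,x⟫ * hε2
  · rw [hQ'x]
    have hMy : Minv ((s*sh + (c-1)*⟪u,x⟫) • e + Qe x) = (s*sh/c) • e + Qe x := by
      rw [hMapp, inner_add_right, real_inner_smul_right, hee, hgE]
      match_scalars <;> first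
        | ring1
        | linear_combination ⟪u,x⟫ * hcc
    rw [hMy, map_add, map_smul, hQe, hQQ, map_add, map_smul]
    have hTub : (s*sh/c) • T u = s • b := by
      by_cases h : v = 0
      · have hb0 : ‖b‖ = 0 := by rw [← hvnorm, h, norm_zero]
        have hbz : b = 0 := norm_eq_zero.mp hb0
        have hsh0 : sh = 0 := by rw [hshb, hb0]
        rw [hbz, hsh0]
        simp
      · have hv0 : ‖v‖ ≠ 0 := norm_ne_zero_iff.mpr h
        have hu : u = (ε/‖v‖) • v := by rw [hu_def, dif_neg h]
        have hvv : 1/‖v‖ * ‖v‖ = 1 := one_div_mul_cancel hv0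
        rw [hu, map_smul, hTv, smul_smul, smul_smul]
        have hscal : s*sh/c * (ε/‖v‖) * a = s := by
          rw [hac, ← hvsh]
          linear_combination (s*ε*ε*(1/‖v‖)*‖v‖) * hcc + (s*ε*ε) * hvv + s * hε2
        rw [hscal]
    rw [hTub]
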